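/- Varshamov–Gilbert bound: Let N ≥ 8. There exists a subset D of the binary hypercube {0,1}^N containing the zero vector such that |D| ≥ 2^{N/8} and for every pair of distinct elements ω, ω′ ∈ D the Hamming distance satisfies H(ω, ω′) = Σ_{i=1}^N 1{ω_i ≠ ω′_i} ≥ N/8. -/

import Mathlib

open MeasureTheory Real Filter

private lemma vg_xor_dist (N : ℕ) (x z y : Fin N → Bool) :
    hammingDist (fun i => xor (x i) (y i)) (fun i => xor (z i) (y i)) = hammingDist x z := by
  simp only [hammingDist]
  congr 1
  apply Finset.filter_congr
  intro i _
  cases x i <;> cases z i <;> cases y i <;> simp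

/-- Varshamov–Gilbert bound. For `N ≥ 8` there is a subset `D` of the
binary hypercube `{0,1}^N` containing the zero vector, of cardinality at least `2^(N/8)`,
whose distinct elements are at Hamming distance at least `N/8` from each other. -/
theorem varshamov_gilbert (N : ℕ) (hN : 8 ≤ N) :
    ∃ D : Finset (Fin N → Bool),
      (fun _ => false) ∈ D ∧
      (2 : ℝ) ^ ((N : ℝ) / 8) ≤ (D.card : ℝ) ∧
      ∀ ω ∈ D, ∀ ω' ∈ D, ω ≠ ω' → (N : ℝ) / 8 ≤ (hammingDist ω ω' : ℝ) := by
  classical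
  set d : ℕ := (N + 7) / 8 with hd
  have hd1 : 1 ≤ d := by omega
  set m : ℕ := d - 1 with hm
  have hdm : d = m + 1 := by omega
  have h8m : 8 * m ≤ N := by omega
  set P : Finset (Fin N → Bool) → Prop :=
    fun D => (fun _ => false) ∈ D ∧ ∀ x ∈ D, ∀ y ∈ D, x ≠ y → d ≤ hammingDist x y with hP
  have hP0 : P {fun _ => false} := by
    simp only [hP]
    refine ⟨by simp, ?_⟩
    intro x hx y hy hxy
    simp only [Finset.mem_singleton] at hx hy
    subst hx; subst hy; exact absurd rfl hxy
  obtain ⟨D, hDmem, hDmax⟩ := Finset.exists_max_image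
      ((Finset.univ : Finset (Finset (Fin N → Bool))).filter P) Finset.card
      ⟨{fun _ => false}, Finset.mem_filter.mpr ⟨Finset.mem_univ _, hP0⟩⟩
  have hDP : P D := (Finset.mem_filter.mp hDmem).2
  -- covering property
  have cover : ∀ x : Fin N → Bool, ∃ y ∈ D, hammingDist x y ≤ m := by
    intro x
    by_contra hcon
    push_neg at hcon
    have hfar : ∀ y ∈ D, d ≤ hammingDist x y := by
      intro y hy; have := hcon y hy; omega
    have hxD : x ∉ D := by
      intro hx
      have := hfar x hx
      simp [hammingDist_self] at this
      omega
    have hPins : P (insert x D) := by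
      refine ⟨Finset.mem_insert_of_mem hDP.1, ?_⟩
      intro a ha b hb hab
      rcases Finset.mem_insert.mp ha with h1 | h1 <;>
        rcases Finset.mem_insert.mp hb with h2 | h2
      · exact absurd (h1.trans h2.symm) hab
      · rw [h1]; exact hfar b h2
      · rw [h2, hammingDist_comm]; exact hfar a h1
      · exact hDP.2 a h1 b h2 hab
    have hle := hDmax (insert x D) (Finset.mem_filter.mpr ⟨Finset.mem_univ _, hPins⟩)
    rw [Finset.card_insert_of_notMem hxD] at hle
    omega
  -- Hamming balls
  set B : (Fin N → Bool) → Finset (Fin N → Bool) :=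
    fun y => Finset.univ.filter (fun x => hammingDist x y ≤ m) with hB
  have hBcard : ∀ y, (B y).card = (B (fun _ => false)).card := by
    intro y
    have dist_eq0 : ∀ a : Fin N → Bool,
        hammingDist (fun i => xor (a i) (y i)) (fun _ => false) = hammingDist a y := by
      intro a
      have h := vg_xor_dist N a y y
      simpa using h
    have dist_eq : ∀ a : Fin N → Bool,
        hammingDist (fun i => xor (a i) (y i)) y = hammingDist a (fun _ => false) := by
      intro a
      have h := vg_xor_dist N a (fun _ => false) y
      simpa using h
    apply Finset.card_nbij' (fun x => fun i => xor (x i) (y i)) (fun z => fun i => xor (z i) (y i))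
    · intro a ha
      simp only [hB, Finset.mem_coe, Finset.mem_filter, Finset.mem_univ, true_and] at ha ⊢
      rw [dist_eq0]; exact ha
    · intro a ha
      simp only [hB, Finset.mem_coe, Finset.mem_filter, Finset.mem_univ, true_and] at ha ⊢
      rw [dist_eq]; exact ha
    · intro a _
      funext i
      show xor (xor (a i) (y i)) (y i) = a i
      cases a i <;> cases y i <;> rfl
    · intro a _
      funext i
      show xor (xor (a i) (y i)) (y i) = a i
      cases a i <;> cases y i <;> rfl
  -- ball volume bound
  set V : ℕ := ∑ k ∈ Finset.range d, N.choose k with hV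
  have hB0V : (B (fun _ => false)).card ≤ V := by
    have hinj : (B (fun _ => false)).card ≤
        ((Finset.range d).biUnion (fun k => (Finset.univ : Finset (Fin N)).powersetCard k)).card := by
      apply Finset.card_le_card_of_injOn (fun x => Finset.univ.filter (fun i => x i = true))
      · intro x hx
        simp only [hB, Finset.mem_coe, Finset.mem_filter, Finset.mem_univ, true_and] at hx
        have hdist : hammingDist x (fun _ => false) =
            (Finset.univ.filter (fun i => x i = true)).card := by
          simp only [hammingDist]
          congr 1
          apply Finset.filter_congr
          intro i _
          cases x i <;> simp
        apply Finset.mem_biUnion.mpr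
        refine ⟨(Finset.univ.filter (fun i => x i = true)).card, ?_, ?_⟩
        · rw [Finset.mem_range]; omega
        · exact Finset.mem_powersetCard.mpr ⟨Finset.subset_univ _, rfl⟩
      · intro x _ x' _ hxx'
        funext i
        have hxx2 : Finset.univ.filter (fun i => x i = true)
            = Finset.univ.filter (fun i => x' i = true) := hxx'
        have hiff : (i ∈ Finset.univ.filter (fun i => x i = true)) ↔
            (i ∈ Finset.univ.filter (fun i => x' i = true)) := by rw [hxx2]
        simp only [Finset.mem_filter, Finset.mem_univ, true_and] at hiff
        cases hx : x i <;> cases hx' : x' i <;> simp [hx, hx'] at hiff ⊢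
    refine hinj.trans ?_
    refine (Finset.card_biUnion_le).trans ?_
    apply le_of_eq
    apply Finset.sum_congr rfl
    intro k _
    rw [Finset.card_powersetCard, Finset.card_univ, Fintype.card_fin]
  -- counting: 2^N ≤ |D| * V
  have hcount : 2 ^ N ≤ D.card * V := by
    have huniv : (Finset.univ : Finset (Fin N → Bool)) ⊆ D.biUnion B := by
      intro x _
      obtain ⟨y, hy, hxy⟩ := cover x
      exact Finset.mem_biUnion.mpr ⟨y, hy, by simp [hB, hxy]⟩
    have h1 : (Finset.univ : Finset (Fin N → Bool)).card ≤ (D.biUnion B).card :=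
      Finset.card_le_card huniv
    have h2 : (D.biUnion B).card ≤ ∑ y ∈ D, (B y).card := Finset.card_biUnion_le
    have h3 : ∑ y ∈ D, (B y).card ≤ D.card * V := by
      calc ∑ y ∈ D, (B y).card = ∑ _y ∈ D, (B (fun _ => false)).card := by
            apply Finset.sum_congr rfl; intro y _; exact hBcard y
        _ = D.card * (B (fun _ => false)).card := by rw [Finset.sum_const, smul_eq_mul]
        _ ≤ D.card * V := Nat.mul_le_mul_left _ hB0V
    have hcu : (Finset.univ : Finset (Fin N → Bool)).card = 2 ^ N := by
      simp [Finset.card_univ]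
    omega
  -- volume estimate: V * 7^(N-m) ≤ 8^N
  have hVbound : V * 7 ^ (N - m) ≤ 8 ^ N := by
    have h1 : V * 7 ^ (N - m) = ∑ k ∈ Finset.range d, N.choose k * 7 ^ (N - m) := by
      rw [hV, Finset.sum_mul]
    have h2 : ∑ k ∈ Finset.range d, N.choose k * 7 ^ (N - m)
        ≤ ∑ k ∈ Finset.range d, N.choose k * 7 ^ (N - k) := by
      apply Finset.sum_le_sum
      intro k hk
      rw [Finset.mem_range] at hk
      exact Nat.mul_le_mul_left _ (Nat.pow_le_pow_right (by norm_num) (by omega))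
    have h3 : ∑ k ∈ Finset.range d, N.choose k * 7 ^ (N - k)
        ≤ ∑ k ∈ Finset.range (N + 1), N.choose k * 7 ^ (N - k) := by
      apply Finset.sum_le_sum_of_subset
      apply Finset.range_subset_range.mpr
      omega
    have h4 : ∑ k ∈ Finset.range (N + 1), N.choose k * 7 ^ (N - k) = 8 ^ N := by
      have h := add_pow (1 : ℕ) 7 N
      norm_num at h
      rw [h]
      apply Finset.sum_congr rfl
      intro k _
      ring
    omega
  -- combine in ℕ: 2^N ≤ D.card ^ 8
  have key : 2 ^ N * 7 ^ (N - m) ≤ D.card * 8 ^ N := by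
    calc 2 ^ N * 7 ^ (N - m) ≤ (D.card * V) * 7 ^ (N - m) :=
          Nat.mul_le_mul_right _ hcount
      _ = D.card * (V * 7 ^ (N - m)) := by ring
      _ ≤ D.card * 8 ^ N := Nat.mul_le_mul_left _ hVbound
  have hA : 2 ^ N * 8 ^ (8 * N) ≤ (2 ^ N * 7 ^ (N - m)) ^ 8 := by
    have e1 : (2 ^ N * 7 ^ (N - m)) ^ 8 = 2 ^ (8 * N) * 7 ^ (8 * (N - m)) := by
      rw [mul_pow, ← pow_mul, ← pow_mul, Nat.mul_comm N 8, Nat.mul_comm (N - m) 8]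
    rw [e1]
    have h88 : (8 : ℕ) ^ (8 * N) = (8 ^ 8) ^ N := by rw [← pow_mul, Nat.mul_comm 8 N]
    have h147 : ((8 : ℕ) ^ 8) ^ N ≤ (14 ^ 7) ^ N :=
      Nat.pow_le_pow_left (by norm_num) N
    have h14 : ((14 : ℕ) ^ 7) ^ N = 2 ^ (7 * N) * 7 ^ (7 * N) := by
      rw [← pow_mul, show (14 : ℕ) = 2 * 7 by norm_num, mul_pow]
    have h7 : (7 : ℕ) ^ (7 * N) ≤ 7 ^ (8 * (N - m)) :=
      Nat.pow_le_pow_right (by norm_num) (by omega)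
    calc 2 ^ N * 8 ^ (8 * N) = 2 ^ N * ((8 ^ 8) ^ N) := by rw [h88]
      _ ≤ 2 ^ N * ((14 ^ 7) ^ N) := Nat.mul_le_mul_left _ h147
      _ = 2 ^ N * (2 ^ (7 * N) * 7 ^ (7 * N)) := by rw [h14]
      _ = 2 ^ (8 * N) * 7 ^ (7 * N) := by
          rw [show 8 * N = N + 7 * N by ring, pow_add, mul_assoc]
      _ ≤ 2 ^ (8 * N) * 7 ^ (8 * (N - m)) := Nat.mul_le_mul_left _ h7
  have hc8 : 2 ^ N ≤ D.card ^ 8 := by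
    have hk8 : (2 ^ N * 7 ^ (N - m)) ^ 8 ≤ (D.card * 8 ^ N) ^ 8 :=
      Nat.pow_le_pow_left key 8
    have e2 : (D.card * 8 ^ N) ^ 8 = D.card ^ 8 * 8 ^ (8 * N) := by
      rw [mul_pow, ← pow_mul]; ring_nf
    have hfin : 2 ^ N * 8 ^ (8 * N) ≤ D.card ^ 8 * 8 ^ (8 * N) := by
      calc 2 ^ N * 8 ^ (8 * N) ≤ (2 ^ N * 7 ^ (N - m)) ^ 8 := hA
        _ ≤ (D.card * 8 ^ N) ^ 8 := hk8
        _ = D.card ^ 8 * 8 ^ (8 * N) := e2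
    exact Nat.le_of_mul_le_mul_right hfin (Nat.pow_pos (by norm_num))
  have hD0 : (fun _ : Fin N => false) ∈ D := hDP.1
  refine ⟨D, hD0, ?_, ?_⟩
  · -- real cardinality bound
    have hcR : (2 : ℝ) ^ (N : ℕ) ≤ (D.card : ℝ) ^ (8 : ℕ) := by exact_mod_cast hc8
    have hrpow : ((2 : ℝ) ^ ((N : ℝ) / 8)) ^ (8 : ℕ) = (2 : ℝ) ^ (N : ℕ) := by
      rw [← Real.rpow_natCast ((2 : ℝ) ^ ((N : ℝ) / 8)) 8, ← Real.rpow_mul (by norm_num)]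
      have h8 : (N : ℝ) / 8 * ((8 : ℕ) : ℝ) = ((N : ℕ) : ℝ) := by push_cast; ring
      rw [h8, Real.rpow_natCast]
    apply le_of_pow_le_pow_left₀ (n := 8) (b := (D.card : ℝ)) (by norm_num) (Nat.cast_nonneg _)
    rw [hrpow]
    exact hcR
  · intro ω hω ω' hω' hne
    have hdle := hDP.2 ω hω ω' hω' hne
    have hnn : N ≤ 8 * hammingDist ω ω' := by omega
    have hnr : (N : ℝ) ≤ 8 * (hammingDist ω ω' : ℝ) := by exact_mod_cast hnn
    rw [div_le_iff₀ (by norm_num)]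
    linarith
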